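/- Let d, k ≥ 1 be integers, let 0 < ε ≤ 1, and let p be a probability measure on [0,1]^d each of whose d one-dimensional coordinate marginals is atomless. Set m = ⌈log₂(4kd/ε)⌉. Then there exists a (k, 2^d·m^d, m^d, ε)-oblivious covering of p. -/

import Mathlib

open MeasureTheory
open scoped Classical
open scoped ENNReal

noncomputable section

/-- The unit cube `[0,1]^d` in `ℝ^d`. -/
def unitCube (d : ℕ) : Set (Fin d → ℝ) := Set.univ.pi fun _ => Set.Icc (0 : ℝ) 1

/-- An axis-aligned rectangle: a product of intervals. -/
def IsAxisRect {d : ℕ} (R : Set (Fin d → ℝ)) : Prop :=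
  ∃ I : Fin d → Set ℝ, (∀ j, (I j).OrdConnected) ∧ R = Set.univ.pi I

/-- A `(k, j, ℓ, ε)`-oblivious covering of a measure `P` on `[0,1]^d`: a finite family `F` of
measurable subsets of the cube such that every point of the cube lies in exactly `ℓ` members of
`F`, and for every partition of the cube into `k` axis-aligned rectangles there is a pairwise
disjoint subfamily of at most `k·j` members, covering all but `ε` of the `P`-mass,
each member being contained in some rectangle of the partition. -/
def IsObliviousCovering (d k j ℓ : ℕ) (ε : ℝ) (P : Measure (Fin d → ℝ))
    (F : Finset (Set (Fin d → ℝ))) : Prop :=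
  (∀ S ∈ F, MeasurableSet S) ∧
  (∀ x ∈ unitCube d, (F.filter fun S => x ∈ S).card = ℓ) ∧
  ∀ R : Fin k → Set (Fin d → ℝ),
    (∀ i, IsAxisRect (R i)) → Set.univ.PairwiseDisjoint R → (⋃ i, R i) = unitCube d →
      ∃ Sf : Finset (Set (Fin d → ℝ)), Sf ⊆ F ∧ Sf.card ≤ k * j ∧
        (Sf : Set (Set (Fin d → ℝ))).Pairwise (Disjoint · ·) ∧
        ENNReal.ofReal (1 - ε) ≤ P (⋃₀ ↑Sf) ∧
        ∀ S ∈ Sf, ∃ i, S ⊆ R i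

set_option linter.unusedSectionVars false
set_option linter.unusedVariables false
set_option maxHeartbeats 1000000

namespace ObCov
open Set ProbabilityTheory




variable {μ : Measure ℝ}

lemma cdf_continuous [IsProbabilityMeasure μ] (hat : ∀ a : ℝ, μ {a} = 0) :
    Continuous (cdf μ) := by
  rw [continuous_iff_continuousAt]
  intro x
  refine (cdf μ).mono.continuousAt_iff_leftLim_eq_rightLim.2 ?_
  rw [(cdf μ).rightLim_eq]
  have h := (cdf μ).measure_singleton x
  rw [measure_cdf, hat] at h
  have h1 : cdf μ x - Function.leftLim (cdf μ) x ≤ 0 := by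
    by_contra hlt
    push_neg at hlt
    rw [eq_comm, ENNReal.ofReal_eq_zero] at h
    linarith
  have h2 : Function.leftLim (⇑(cdf μ)) x ≤ cdf μ x := (cdf μ).mono.leftLim_le le_rfl
  linarith

lemma compl_Icc_null [IsProbabilityMeasure μ] (h1 : μ (Icc 0 1) = 1) :
    μ (Icc (0:ℝ) 1)ᶜ = 0 := by
  rw [measure_compl measurableSet_Icc (by simp), h1]
  simp

lemma Iic_zero_null [IsProbabilityMeasure μ] (h1 : μ (Icc 0 1) = 1)
    (hat : ∀ a : ℝ, μ {a} = 0) : μ (Iic (0:ℝ)) = 0 := by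
  have hsub : Iic (0:ℝ) ⊆ {0} ∪ (Icc (0:ℝ) 1)ᶜ := by
    intro x hx
    rcases eq_or_lt_of_le (mem_Iic.1 hx) with h | h
    · exact Or.inl (by simp [h])
    · exact Or.inr (by simp [Set.mem_Icc]; intro h'; linarith)
  refine le_antisymm ?_ zero_le
  calc μ (Iic (0:ℝ)) ≤ μ ({0} ∪ (Icc (0:ℝ) 1)ᶜ) := measure_mono hsub
    _ ≤ μ {0} + μ (Icc (0:ℝ) 1)ᶜ := measure_union_le _ _
    _ = 0 := by rw [hat, compl_Icc_null h1]; simp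

lemma cdf_zero' [IsProbabilityMeasure μ] (h1 : μ (Icc 0 1) = 1)
    (hat : ∀ a : ℝ, μ {a} = 0) : cdf μ 0 = 0 := by
  rw [cdf_eq_real, measureReal_def, Iic_zero_null h1 hat]; simp

lemma cdf_one' [IsProbabilityMeasure μ] (h1 : μ (Icc 0 1) = 1) : cdf μ 1 = 1 := by
  have : μ (Iic (1:ℝ)) = 1 := by
    refine le_antisymm prob_le_one ?_
    rw [← h1]; exact measure_mono Icc_subset_Iic_self
  rw [cdf_eq_real, measureReal_def, this]; simp

/-- quantile point -/
def qp (μ : Measure ℝ) (N i : ℕ) : ℝ :=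
  sInf (Icc (0:ℝ) 1 ∩ (cdf μ) ⁻¹' {(i : ℝ) / N})

section qp

variable [IsProbabilityMeasure μ] (h1 : μ (Icc 0 1) = 1) (hat : ∀ a : ℝ, μ {a} = 0)
  {N : ℕ} (hN : 0 < N)
include h1 hat hN

lemma qp_spec {i : ℕ} (hi : i ≤ N) :
    qp μ N i ∈ Icc (0:ℝ) 1 ∧ cdf μ (qp μ N i) = (i : ℝ) / N := by
  have hc := cdf_continuous hat
  have hcl : IsClosed (Icc (0:ℝ) 1 ∩ (cdf μ) ⁻¹' {(i : ℝ) / N}) :=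
    isClosed_Icc.inter (IsClosed.preimage hc isClosed_singleton)
  have hne : (Icc (0:ℝ) 1 ∩ (cdf μ) ⁻¹' {(i : ℝ) / N}).Nonempty := by
    have hmem : (i : ℝ) / N ∈ Icc (cdf μ 0) (cdf μ 1) := by
      rw [cdf_zero' h1 hat, cdf_one' h1]
      constructor
      · positivity
      · rw [div_le_one (by positivity)]
        exact_mod_cast hi
    obtain ⟨x, hx1, hx2⟩ := intermediate_value_Icc (by norm_num : (0:ℝ) ≤ 1)
      hc.continuousOn hmem
    exact ⟨x, hx1, hx2⟩
  have hbdd : BddBelow (Icc (0:ℝ) 1 ∩ (cdf μ) ⁻¹' {(i : ℝ) / N}) :=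
    ⟨0, fun y hy => hy.1.1⟩
  have := hcl.csInf_mem hne hbdd
  exact ⟨this.1, this.2⟩

lemma qp_lt {i i' : ℕ} (hii' : i < i') (hi' : i' ≤ N) : qp μ N i < qp μ N i' := by
  have hc := cdf_continuous hat
  have hs := qp_spec h1 hat hN (le_of_lt (lt_of_lt_of_le hii' hi'))
  have hs' := qp_spec h1 hat hN hi'
  have hdivlt : (i : ℝ) / N < (i' : ℝ) / N := by
    apply div_lt_div_of_pos_right ?_ ?_ <;> [exact_mod_cast hii'; positivity]
  -- find x ≤ qp i' with cdf x = i/N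
  have h0le : (0:ℝ) ≤ qp μ N i' := hs'.1.1
  have hmem : (i : ℝ) / N ∈ Icc (cdf μ 0) (cdf μ (qp μ N i')) := by
    rw [cdf_zero' h1 hat, hs'.2]
    exact ⟨by positivity, le_of_lt hdivlt⟩
  obtain ⟨x, hx1, hx2⟩ := intermediate_value_Icc h0le hc.continuousOn hmem
  have hxI : x ∈ Icc (0:ℝ) 1 := ⟨hx1.1, le_trans hx1.2 hs'.1.2⟩
  have hle : qp μ N i ≤ x := csInf_le ⟨0, fun y hy => hy.1.1⟩ ⟨hxI, hx2⟩
  have hne : qp μ N i ≠ qp μ N i' := by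
    intro h
    rw [h, hs'.2] at hs
    exact absurd hs.2 (ne_of_gt hdivlt)
  exact lt_of_le_of_ne (le_trans hle hx1.2) hne

lemma qp_mono {i i' : ℕ} (hii' : i ≤ i') (hi' : i' ≤ N) : qp μ N i ≤ qp μ N i' := by
  rcases eq_or_lt_of_le hii' with h | h
  · subst h; exact le_rfl
  · exact le_of_lt (qp_lt h1 hat hN h hi')

lemma qp_inj {i i' : ℕ} (hi : i ≤ N) (hi' : i' ≤ N) (h : qp μ N i = qp μ N i') : i = i' := by
  rcases lt_trichotomy i i' with hc | hc | hc
  · exact absurd h (ne_of_lt (qp_lt h1 hat hN hc hi'))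
  · exact hc
  · exact absurd h.symm (ne_of_lt (qp_lt h1 hat hN hc hi))

lemma qp_zero : qp μ N 0 = 0 := by
  have h0 : (0:ℝ) ∈ Icc (0:ℝ) 1 ∩ (cdf μ) ⁻¹' {(0 : ℝ) / N} := by
    refine ⟨by norm_num, ?_⟩
    simp [cdf_zero' h1 hat]
  refine le_antisymm (csInf_le ⟨0, fun y hy => hy.1.1⟩ (by exact_mod_cast h0)) ?_
  exact le_csInf ⟨0, by exact_mod_cast h0⟩ fun y hy => hy.1.1

lemma meas_Iio_qp {e : ℕ} (he : e ≤ N) :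
    μ (Iio (qp μ N e)) = ENNReal.ofReal ((e : ℝ) / N) := by
  have h : μ (Iio (qp μ N e)) = μ (Iic (qp μ N e)) := by
    refine le_antisymm (measure_mono Iio_subset_Iic_self) ?_
    have : Iic (qp μ N e) ⊆ Iio (qp μ N e) ∪ {qp μ N e} := by
      intro x hx
      rcases lt_or_eq_of_le (mem_Iic.1 hx) with h | h
      · exact Or.inl h
      · exact Or.inr (by simp [h])
    calc μ (Iic (qp μ N e)) ≤ μ (Iio (qp μ N e) ∪ {qp μ N e}) := measure_mono this
      _ ≤ μ (Iio (qp μ N e)) + μ {qp μ N e} := measure_union_le _ _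
      _ = μ (Iio (qp μ N e)) := by rw [hat]; simp
  rw [h, ← ofReal_cdf, (qp_spec h1 hat hN he).2]

end qp

/-- a basic interval of the partition: `[qp s, qp e)`, closed to `1` at the top. -/
def piece (μ : Measure ℝ) (N : ℕ) (p : ℕ × ℕ) : Set ℝ :=
  if p.2 = N then Icc (qp μ N p.1) 1 else Ico (qp μ N p.1) (qp μ N p.2)

lemma piece_measurable (μ : Measure ℝ) (N : ℕ) (p : ℕ × ℕ) : MeasurableSet (piece μ N p) := by
  unfold piece
  split <;> [exact measurableSet_Icc; exact measurableSet_Ico]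

lemma piece_subset_Ici (μ : Measure ℝ) (N : ℕ) (p : ℕ × ℕ) :
    piece μ N p ⊆ Ici (qp μ N p.1) := by
  unfold piece
  split
  · exact fun x hx => hx.1
  · exact fun x hx => hx.1

lemma piece_subset_Iio (μ : Measure ℝ) (N : ℕ) {p : ℕ × ℕ} (h : p.2 ≠ N) :
    piece μ N p ⊆ Iio (qp μ N p.2) := by
  unfold piece
  rw [if_neg h]
  exact fun x hx => hx.2

section pieces

variable [IsProbabilityMeasure μ] (h1 : μ (Icc 0 1) = 1) (hat : ∀ a : ℝ, μ {a} = 0)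
  {N : ℕ} (hN : 0 < N)
include h1 hat hN

lemma piece_nonempty {p : ℕ × ℕ} (hp : p.1 < p.2) (hp2 : p.2 ≤ N) :
    (piece μ N p).Nonempty := by
  unfold piece
  split
  · exact ⟨qp μ N p.1, le_refl _, (qp_spec h1 hat hN (le_trans (le_of_lt hp) hp2)).1.2⟩
  · exact ⟨qp μ N p.1, le_refl _, qp_lt h1 hat hN hp hp2⟩

lemma piece_subset_Icc {p : ℕ × ℕ} (hp1 : p.1 ≤ N) (hp2 : p.2 ≤ N) :
    piece μ N p ⊆ Icc (0:ℝ) 1 := by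
  have h01 := (qp_spec h1 hat hN hp1).1
  unfold piece
  split
  · exact fun x hx => ⟨le_trans h01.1 hx.1, hx.2⟩
  · exact fun x hx => ⟨le_trans h01.1 hx.1,
      le_trans (le_of_lt hx.2) (qp_spec h1 hat hN hp2).1.2⟩

lemma piece_disjoint {p p' : ℕ × ℕ} (hp : p.1 < p.2) (h : p.2 ≤ p'.1) (hp' : p'.1 < p'.2)
    (hp'2 : p'.2 ≤ N) : Disjoint (piece μ N p) (piece μ N p') := by
  have hpN : p.2 ≠ N := by omega
  rw [Set.disjoint_left]
  intro x hx hx'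
  have h1x : x < qp μ N p.2 := piece_subset_Iio μ N hpN hx
  have h2x : qp μ N p'.1 ≤ x := piece_subset_Ici μ N p' hx'
  have : qp μ N p.2 ≤ qp μ N p'.1 := qp_mono h1 hat hN h (by omega)
  linarith

lemma piece_union_fine {s e : ℕ} (hse : s < e) (he : e ≤ N) :
    piece μ N (s, e) = ⋃ n ∈ Finset.Ico s e, piece μ N (n, n + 1) := by
  induction e, hse using Nat.le_induction with
  | base =>
    simp [Finset.Ico_self]
  | succ e hse ih =>
    have heN : e ≠ N := by omega
    have hIco : Finset.Ico s (e+1) = insert e (Finset.Ico s e) := by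
      ext a; simp [Finset.mem_Ico]; omega
    rw [hIco, Finset.set_biUnion_insert, ← ih (by omega), Set.union_comm]
    have hqse : qp μ N s ≤ qp μ N e := qp_mono h1 hat hN (by omega) (by omega)
    show piece μ N (s, e+1) = piece μ N (s, e) ∪ piece μ N (e, e+1)
    unfold piece
    simp only [if_neg heN]
    by_cases hE : e + 1 = N
    · rw [if_pos hE, if_pos hE]
      exact (Set.Ico_union_Icc_eq_Icc hqse (qp_spec h1 hat hN (by omega)).1.2).symm
    · rw [if_neg hE, if_neg hE]
      exact (Set.Ico_union_Ico_eq_Ico hqse (qp_mono h1 hat hN (by omega) (by omega))).symm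

lemma piece_zero_N : piece μ N (0, N) = Icc (0:ℝ) 1 := by
  unfold piece
  rw [if_pos rfl, qp_zero h1 hat hN]

lemma fine_exists_unique {x : ℝ} (hx : x ∈ Icc (0:ℝ) 1) :
    ∃! n, n < N ∧ x ∈ piece μ N (n, n + 1) := by
  have hx' : x ∈ piece μ N (0, N) := by rw [piece_zero_N h1 hat hN]; exact hx
  rw [piece_union_fine h1 hat hN hN (le_refl N)] at hx'
  simp only [Set.mem_iUnion, Finset.mem_Ico] at hx'
  obtain ⟨n, ⟨_, hn2⟩, hn3⟩ := hx'
  refine ⟨n, ⟨hn2, hn3⟩, ?_⟩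
  intro n' ⟨hn'1, hn'2⟩
  by_contra hne
  rcases lt_or_gt_of_ne hne with hlt | hlt
  · exact (Set.disjoint_left.1 (piece_disjoint h1 hat hN (by omega) (by omega : n' + 1 ≤ n)
      (by omega) (by omega))) hn'2 hn3
  · exact (Set.disjoint_left.1 (piece_disjoint h1 hat hN (by omega) (by omega : n + 1 ≤ n')
      (by omega) (by omega))) hn3 hn'2

lemma meas_fine_le {n : ℕ} (hn : n < N) :
    μ (piece μ N (n, n + 1)) ≤ ENNReal.ofReal (1 / N) := by
  by_cases hE : n + 1 = N
  · have hsub : piece μ N (n, n+1) ⊆ Iio (qp μ N n) ∪ piece μ N (n, n+1) := subset_union_right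
    have hdisj : Disjoint (Iio (qp μ N n)) (piece μ N (n, n+1)) := by
      rw [Set.disjoint_left]
      intro x hx hx'
      exact absurd (piece_subset_Ici μ N _ hx') (by simpa using hx)
    have hunle : μ (Iio (qp μ N n)) + μ (piece μ N (n, n+1)) ≤ 1 := by
      rw [← measure_union hdisj (piece_measurable μ N _)]
      exact prob_le_one
    rw [meas_Iio_qp h1 hat hN (by omega)] at hunle
    have hle : μ (piece μ N (n, n+1)) ≤ 1 - ENNReal.ofReal ((n : ℝ)/N) :=
      ENNReal.le_sub_of_add_le_left ENNReal.ofReal_ne_top hunle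
    refine le_trans hle ?_
    rw [← ENNReal.ofReal_one, ← ENNReal.ofReal_sub _ (by positivity)]
    apply ENNReal.ofReal_le_ofReal
    have hNpos : (0:ℝ) < (N:ℕ) := by positivity
    rw [sub_le_iff_le_add, ← add_div, le_div_iff₀ hNpos, one_mul]
    have : (n:ℝ) + 1 = (N:ℕ) := by exact_mod_cast hE
    linarith
  · have hsplit : μ (Iio (qp μ N n)) + μ (piece μ N (n, n+1)) = μ (Iio (qp μ N (n+1))) := by
      rw [← measure_union ?_ (piece_measurable μ N _)]
      · congr 1
        unfold piece
        rw [if_neg hE]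
        exact Set.Iio_union_Ico_eq_Iio (qp_mono h1 hat hN (by omega) (by omega))
      · rw [Set.disjoint_left]
        intro x hx hx'
        exact absurd (piece_subset_Ici μ N _ hx') (by simpa using hx)
    rw [meas_Iio_qp h1 hat hN (by omega), meas_Iio_qp h1 hat hN (by omega)] at hsplit
    rw [add_comm] at hsplit
    rw [ENNReal.eq_sub_of_add_eq ENNReal.ofReal_ne_top hsplit,
      ← ENNReal.ofReal_sub _ (by positivity)]
    apply ENNReal.ofReal_le_ofReal
    push_cast
    rw [div_sub_div_same]
    norm_num

lemma piece_eq_inj {p p' : ℕ × ℕ} (hp : p.1 < p.2) (hp2 : p.2 ≤ N)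
    (hp' : p'.1 < p'.2) (hp'2 : p'.2 ≤ N) (h : piece μ N p = piece μ N p') : p = p' := by
  have hq1 : ∀ i, i ≤ N → qp μ N i ≤ 1 := fun i hi => (qp_spec h1 hat hN hi).1.2
  unfold piece at h
  by_cases hA : p.2 = N <;> by_cases hB : p'.2 = N
  · rw [if_pos hA, if_pos hB] at h
    have hm1 : qp μ N p.1 ∈ Icc (qp μ N p.1) 1 := Set.left_mem_Icc.2 (hq1 p.1 (by omega))
    have hm2 : qp μ N p'.1 ∈ Icc (qp μ N p'.1) 1 := Set.left_mem_Icc.2 (hq1 p'.1 (by omega))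
    rw [h] at hm1
    rw [← h] at hm2
    have heq1 := qp_inj h1 hat hN (show p.1 ≤ N by omega) (by omega)
      (le_antisymm hm2.1 hm1.1)
    exact Prod.ext heq1 (hA.trans hB.symm)
  · exfalso
    rw [if_pos hA, if_neg hB] at h
    have hm1 : (1:ℝ) ∈ Icc (qp μ N p.1) 1 := Set.right_mem_Icc.2 (hq1 p.1 (by omega))
    rw [h] at hm1
    exact absurd (hq1 p'.2 hp'2) (not_le.2 hm1.2)
  · exfalso
    rw [if_neg hA, if_pos hB] at h
    have hm1 : (1:ℝ) ∈ Icc (qp μ N p'.1) 1 := Set.right_mem_Icc.2 (hq1 p'.1 (by omega))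
    rw [← h] at hm1
    exact absurd (hq1 p.2 hp2) (not_le.2 hm1.2)
  · rw [if_neg hA, if_neg hB] at h
    have hab : qp μ N p.1 < qp μ N p.2 := qp_lt h1 hat hN hp hp2
    have hab' : qp μ N p'.1 < qp μ N p'.2 := qp_lt h1 hat hN hp' hp'2
    have hm1 : qp μ N p.1 ∈ Ico (qp μ N p.1) (qp μ N p.2) := Set.left_mem_Ico.2 hab
    have hm2 : qp μ N p'.1 ∈ Ico (qp μ N p'.1) (qp μ N p'.2) := Set.left_mem_Ico.2 hab'
    rw [h] at hm1
    rw [← h] at hm2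
    have heq1 : p.1 = p'.1 := qp_inj h1 hat hN (by omega) (by omega)
      (le_antisymm hm2.1 hm1.1)
    have heq2 : p.2 = p'.2 := by
      rcases lt_trichotomy p.2 p'.2 with hc | hc | hc
      · exfalso
        have : qp μ N p.2 ∈ Ico (qp μ N p'.1) (qp μ N p'.2) := by
          constructor
          · rw [← heq1]; exact le_of_lt hab
          · exact qp_lt h1 hat hN hc hp'2
        rw [← h] at this
        exact absurd this.2 (lt_irrefl _)
      · exact hc
      · exfalso
        have : qp μ N p'.2 ∈ Ico (qp μ N p.1) (qp μ N p.2) := by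
          constructor
          · rw [heq1]; exact le_of_lt hab'
          · exact qp_lt h1 hat hN hc hp2
        rw [h] at this
        exact absurd this.2 (lt_irrefl _)
    exact Prod.ext heq1 heq2

end pieces




/-- left endpoint of dyadic interval `q = (level, index)` in `[0, 2^m)` -/
def dyS (m : ℕ) (q : ℕ × ℕ) : ℕ := q.2 * 2 ^ (m - q.1)

/-- right endpoint -/
def dyE (m : ℕ) (q : ℕ × ℕ) : ℕ := (q.2 + 1) * 2 ^ (m - q.1)

def dyPair (m : ℕ) (q : ℕ × ℕ) : ℕ × ℕ := (dyS m q, dyE m q)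

def validQ (m : ℕ) : Finset (ℕ × ℕ) :=
  (Finset.Icc 1 m ×ˢ Finset.range (2 ^ m)).filter fun q => q.2 < 2 ^ q.1

/-- the canonical dyadic decomposition of the integer range `[α, β) ⊆ [0, 2^m)`. -/
def dyDec (m α β : ℕ) : Finset (ℕ × ℕ) :=
  (validQ m).filter fun q =>
    α ≤ dyS m q ∧ dyE m q ≤ β ∧
    (q.1 = 1 ∨ q.2 / 2 * 2 ^ (m - q.1 + 1) < α ∨ β < (q.2 / 2 + 1) * 2 ^ (m - q.1 + 1))

lemma dyDec_subset (m α β : ℕ) : dyDec m α β ⊆ validQ m := Finset.filter_subset _ _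

lemma mem_validQ {m : ℕ} {q : ℕ × ℕ} :
    q ∈ validQ m ↔ (1 ≤ q.1 ∧ q.1 ≤ m) ∧ q.2 < 2 ^ q.1 ∧ q.2 < 2 ^ m := by
  unfold validQ
  simp [Finset.mem_filter, Finset.mem_product, Finset.mem_Icc, Finset.mem_range]
  tauto

lemma validQ_pair {m : ℕ} {q : ℕ × ℕ} (h : q ∈ validQ m) :
    dyS m q < dyE m q ∧ dyE m q ≤ 2 ^ m := by
  obtain ⟨⟨h1, h2⟩, h3, _⟩ := mem_validQ.1 h
  constructor
  · exact (Nat.mul_lt_mul_right (pow_pos (by norm_num) _)).2 (Nat.lt_succ_self _)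
  · calc (q.2 + 1) * 2 ^ (m - q.1) ≤ 2 ^ q.1 * 2 ^ (m - q.1) :=
        Nat.mul_le_mul_right _ h3
    _ = 2 ^ m := by rw [← pow_add]; congr 1; omega

lemma mem_dyDec {m α β : ℕ} {q : ℕ × ℕ} :
    q ∈ dyDec m α β ↔ q ∈ validQ m ∧ α ≤ dyS m q ∧ dyE m q ≤ β ∧
      (q.1 = 1 ∨ q.2 / 2 * 2 ^ (m - q.1 + 1) < α ∨ β < (q.2 / 2 + 1) * 2 ^ (m - q.1 + 1)) := by
  unfold dyDec
  simp [Finset.mem_filter]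

lemma nat_lt_div_succ {n w : ℕ} (hw : 0 < w) : n < (n / w + 1) * w := by
  have := Nat.div_add_mod n w
  have := Nat.mod_lt n hw
  nlinarith [Nat.div_mul_le_self n w]

lemma round_le {w w' n : ℕ} (hw' : 0 < w') (hd : w' ∣ w) (hw : 0 < w) :
    n / w * w ≤ n / w' * w' ∧ n / w' * w' + w' ≤ n / w * w + w := by
  obtain ⟨c, hc⟩ := hd
  have hcpos : 0 < c := by
    rcases Nat.eq_zero_or_pos c with h | h
    · subst h; simp at hc; omega
    · exact h
  constructor
  · have ha : n / w * c * w' ≤ n := by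
      calc n / w * c * w' = n / w * w := by rw [hc]; ring
      _ ≤ n := Nat.div_mul_le_self n w
    have := (Nat.le_div_iff_mul_le hw').2 ha
    calc n / w * w = n / w * c * w' := by rw [hc]; ring
    _ ≤ n / w' * w' := Nat.mul_le_mul_right _ this
  · have hb : n / w' * w' ≤ n := Nat.div_mul_le_self n w'
    have hn : n < (n / w + 1) * w := nat_lt_div_succ hw
    have hlt : n / w' * w' < ((n / w + 1) * c) * w' := by
      calc n / w' * w' ≤ n := hb
      _ < (n / w + 1) * w := hn
      _ = (n / w + 1) * c * w' := by rw [hc]; ring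
    have : n / w' < (n / w + 1) * c := lt_of_mul_lt_mul_right hlt (le_of_lt hw')
    calc n / w' * w' + w' = (n / w' + 1) * w' := by ring
    _ ≤ ((n / w + 1) * c) * w' := Nat.mul_le_mul_right _ this
    _ = (n / w + 1) * w := by rw [hc]; ring
    _ = n / w * w + w := by ring

lemma stickL_unique {w α i i' : ℕ} (hw : 0 < w)
    (h1 : i / 2 * (2 * w) < α) (h2 : α ≤ i * w)
    (h1' : i' / 2 * (2 * w) < α) (h2' : α ≤ i' * w) : i = i' := by
  have key : ∀ j : ℕ, j / 2 * (2 * w) < α → α ≤ j * w → (j - 1) * w < α ∧ α ≤ j * w := by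
    intro j hj1 hj2
    have ha : j / 2 * (2 * w) = (j / 2 * 2) * w := by ring
    rw [ha] at hj1
    have hlt : j / 2 * 2 < j := by
      by_contra hcon
      push_neg at hcon
      have : j / 2 * 2 = j := by omega
      rw [this] at hj1; omega
    have : j - 1 ≤ j / 2 * 2 := by omega
    exact ⟨lt_of_le_of_lt (Nat.mul_le_mul_right _ this) hj1, hj2⟩
  obtain ⟨k1, k2⟩ := key i h1 h2
  obtain ⟨k1', k2'⟩ := key i' h1' h2'
  by_contra hne
  rcases Nat.lt_or_ge i i' with hlt | hge
  · have : i * w ≤ (i' - 1) * w := Nat.mul_le_mul_right _ (by omega)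
    omega
  · have hlt : i' < i := by omega
    have : i' * w ≤ (i - 1) * w := Nat.mul_le_mul_right _ (by omega)
    omega

lemma stickR_unique {w β i i' : ℕ} (hw : 0 < w)
    (h1 : β < (i / 2 + 1) * (2 * w)) (h2 : (i + 1) * w ≤ β)
    (h1' : β < (i' / 2 + 1) * (2 * w)) (h2' : (i' + 1) * w ≤ β) : i = i' := by
  have key : ∀ j : ℕ, β < (j / 2 + 1) * (2 * w) → (j + 1) * w ≤ β → β < (j + 2) * w := by
    intro j hj1 hj2
    have ha : (j / 2 + 1) * (2 * w) = (j / 2 * 2 + 2) * w := by ring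
    rw [ha] at hj1
    have : j / 2 * 2 + 2 ≤ j + 2 := by omega
    exact lt_of_lt_of_le hj1 (Nat.mul_le_mul_right _ this)
  have k1 := key i h1 h2
  have k1' := key i' h1' h2'
  by_contra hne
  rcases Nat.lt_or_ge i i' with hlt | hge
  · have : (i + 2) * w ≤ (i' + 1) * w := Nat.mul_le_mul_right _ (by omega)
    omega
  · have hlt : i' < i := by omega
    have : (i' + 2) * w ≤ (i + 1) * w := Nat.mul_le_mul_right _ (by omega)
    omega

lemma dyDec_card {m α β : ℕ} : (dyDec m α β).card ≤ 2 * m := by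
  classical
  have hmap : ∀ q ∈ dyDec m α β, q.1 ∈ Finset.Icc 1 m := by
    intro q hq
    have := (mem_validQ.1 (dyDec_subset m α β hq))
    exact Finset.mem_Icc.2 ⟨this.1.1, this.1.2⟩
  rw [Finset.card_eq_sum_card_fiberwise hmap]
  have hfiber : ∀ t ∈ Finset.Icc 1 m,
      ((dyDec m α β).filter fun q => q.1 = t).card ≤ 2 := by
    intro t ht
    have : ((dyDec m α β).filter fun q => q.1 = t).card ≤ (Finset.univ : Finset Bool).card := by
      apply Finset.card_le_card_of_injOn
        (fun q => if t = 1 then decide (q.2 = 0) else decide (q.2 / 2 * 2 ^ (m - t + 1) < α))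
      · intro q _; exact Finset.mem_univ _
      · intro q hq q' hq' heq
        simp only [Finset.mem_coe, Finset.mem_filter] at hq hq'
        obtain ⟨hqd, hqt⟩ := hq
        obtain ⟨hq'd, hq't⟩ := hq'
        obtain ⟨hqv, hqa, hqb, hqs⟩ := mem_dyDec.1 hqd
        obtain ⟨hq'v, hq'a, hq'b, hq's⟩ := mem_dyDec.1 hq'd
        have hq2 := (mem_validQ.1 hqv).2.1
        have hq'2 := (mem_validQ.1 hq'v).2.1
        have hqef : q = (t, q.2) := by rw [← hqt]
        have hq'ef : q' = (t, q'.2) := by rw [← hq't]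
        rw [hqef, hq'ef]
        have hw : 0 < 2 ^ (m - t) := pow_pos (by norm_num) _
        have hpow : (2:ℕ) ^ (m - t + 1) = 2 * 2 ^ (m - t) := by
          rw [pow_succ]; ring
        by_cases ht1 : t = 1
        · subst ht1
          rw [hqt, pow_one] at hq2
          rw [hq't, pow_one] at hq'2
          simp only [eq_self_iff_true, if_true, decide_eq_decide] at heq
          congr 1
          by_cases hz : q.2 = 0
          · rw [hz, heq.1 hz]
          · have hz' : ¬ q'.2 = 0 := fun h => hz (heq.2 h)
            omega
        · simp only [if_neg ht1, decide_eq_decide] at heq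
          have hqs' : q.2 / 2 * 2 ^ (m - t + 1) < α ∨ β < (q.2 / 2 + 1) * 2 ^ (m - t + 1) := by
            rcases hqs with h | h | h
            · rw [hqt] at h; exact absurd h ht1
            · rw [hqt] at h; exact Or.inl h
            · rw [hqt] at h; exact Or.inr h
          have hq's' : q'.2 / 2 * 2 ^ (m - t + 1) < α ∨ β < (q'.2 / 2 + 1) * 2 ^ (m - t + 1) := by
            rcases hq's with h | h | h
            · rw [hq't] at h; exact absurd h ht1
            · rw [hq't] at h; exact Or.inl h
            · rw [hq't] at h; exact Or.inr h
          unfold dyS at hqa hq'a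
          unfold dyE at hqb hq'b
          rw [hqt] at hqa hqb
          rw [hq't] at hq'a hq'b
          congr 1
          by_cases hL : q.2 / 2 * 2 ^ (m - t + 1) < α
          · have hL' : q'.2 / 2 * 2 ^ (m - t + 1) < α := heq.1 hL
            rw [hpow] at hL hL'
            exact stickL_unique hw hL hqa hL' hq'a
          · have hL' : ¬ q'.2 / 2 * 2 ^ (m - t + 1) < α := fun h => hL (heq.2 h)
            have hR : β < (q.2 / 2 + 1) * 2 ^ (m - t + 1) := hqs'.resolve_left hL
            have hR' : β < (q'.2 / 2 + 1) * 2 ^ (m - t + 1) := hq's'.resolve_left hL'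
            rw [hpow] at hR hR'
            exact stickR_unique hw hR hqb hR' hq'b
    simpa using this
  calc ∑ t ∈ Finset.Icc 1 m, ((dyDec m α β).filter fun q => q.1 = t).card
      ≤ ∑ t ∈ Finset.Icc 1 m, 2 := Finset.sum_le_sum hfiber
    _ = 2 * m := by
        rw [Finset.sum_const, Nat.card_Icc, smul_eq_mul]
        omega

lemma dyDec_ranges_disjoint {m α β : ℕ} {q q' : ℕ × ℕ} (hq : q ∈ dyDec m α β)
    (hq' : q' ∈ dyDec m α β) (hne : q ≠ q') {n : ℕ}
    (hn : dyS m q ≤ n ∧ n < dyE m q) (hn' : dyS m q' ≤ n ∧ n < dyE m q') : False := by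
  -- wlog q.1 ≤ q'.1
  have main : ∀ q q' : ℕ × ℕ, q ∈ dyDec m α β → q' ∈ dyDec m α β → q ≠ q' → q.1 ≤ q'.1 →
      dyS m q ≤ n → n < dyE m q → dyS m q' ≤ n → n < dyE m q' → False := by
    intro q q' hq hq' hne hle ha hb ha' hb'
    obtain ⟨hqv, hqa, hqb, hqs⟩ := mem_dyDec.1 hq
    obtain ⟨hq'v, hq'a, hq'b, hq's⟩ := mem_dyDec.1 hq'
    obtain ⟨⟨ht1, htm⟩, _, _⟩ := mem_validQ.1 hqv
    obtain ⟨⟨ht1', htm'⟩, _, _⟩ := mem_validQ.1 hq'v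
    have hidx : q.2 = n / 2 ^ (m - q.1) := (Nat.div_eq_of_lt_le ha hb).symm
    have hidx' : q'.2 = n / 2 ^ (m - q'.1) := (Nat.div_eq_of_lt_le ha' hb').symm
    rcases eq_or_lt_of_le hle with hteq | htlt
    · apply hne
      have : q.2 = q'.2 := by rw [hidx, hidx', hteq]
      exact Prod.ext hteq this
    · -- q.1 < q'.1, so q'.1 ≥ 2
      have ht2' : q'.1 ≠ 1 := by omega
      have hstick : q'.2 / 2 * 2 ^ (m - q'.1 + 1) < α ∨ β < (q'.2 / 2 + 1) * 2 ^ (m - q'.1 + 1) := by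
        rcases hq's with h | h | h
        · exact absurd h ht2'
        · exact Or.inl h
        · exact Or.inr h
      -- parent index
      have hpar : q'.2 / 2 = n / 2 ^ (m - q'.1 + 1) := by
        rw [hidx', Nat.div_div_eq_div_mul, ← pow_succ]
      set w : ℕ := 2 ^ (m - q.1) with hw
      set W : ℕ := 2 ^ (m - q'.1 + 1) with hW
      have hWw : W ∣ w := by
        apply pow_dvd_pow
        omega
      have hr := round_le (w := w) (w' := W) (n := n) (pow_pos (by norm_num) _) hWw
        (pow_pos (by norm_num) _)
      have e1 : α ≤ n / W * W := by
        calc α ≤ dyS m q := hqa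
        _ = n / w * w := by rw [dyS, hidx]
        _ ≤ n / W * W := hr.1
      have e2 : n / W * W + W ≤ β := by
        calc n / W * W + W ≤ n / w * w + w := hr.2
        _ = dyE m q := by rw [dyE, hidx]; ring
        _ ≤ β := hqb
      rw [hpar] at hstick
      rcases hstick with h | h
      · exact absurd e1 (not_le.2 h)
      · rw [add_one_mul] at h
        exact absurd e2 (not_le.2 h)
  rcases Nat.le_or_le q.1 q'.1 with h | h
  · exact main q q' hq hq' hne h hn.1 hn.2 hn'.1 hn'.2
  · exact main q' q hq' hq (Ne.symm hne) h hn'.1 hn'.2 hn.1 hn.2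

lemma dyDec_cover_aux {m α β : ℕ} (hβ : β ≤ 2 ^ m) {n : ℕ} (hn : n < 2 ^ m) :
    ∀ t, 1 ≤ t → t ≤ m → α ≤ n / 2 ^ (m - t) * 2 ^ (m - t) →
    (n / 2 ^ (m - t) + 1) * 2 ^ (m - t) ≤ β →
    ∃ q ∈ dyDec m α β, dyS m q ≤ n ∧ n < dyE m q := by
  intro t
  induction t using Nat.strong_induction_on with
  | _ t ih =>
    intro ht1 htm hsa hsb
    set w : ℕ := 2 ^ (m - t) with hw
    have hwpos : 0 < w := pow_pos (by norm_num) _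
    have hmemv : (t, n / w) ∈ validQ m := by
      rw [mem_validQ]
      refine ⟨⟨ht1, htm⟩, ?_, ?_⟩
      · show n / w < 2 ^ t
        rw [Nat.div_lt_iff_lt_mul hwpos]
        calc n < 2 ^ m := hn
        _ = 2 ^ t * w := by rw [hw, ← pow_add]; congr 1; omega
      · exact lt_of_le_of_lt (Nat.div_le_self _ _) hn
    have hrange : dyS m (t, n / w) ≤ n ∧ n < dyE m (t, n / w) := by
      constructor
      · exact Nat.div_mul_le_self n w
      · exact nat_lt_div_succ hwpos
    by_cases hone : t = 1
    · refine ⟨(t, n / w), ?_, hrange⟩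
      rw [mem_dyDec]
      exact ⟨hmemv, hsa, hsb, Or.inl hone⟩
    · -- t ≥ 2; check whether the parent interval is contained
      set W : ℕ := 2 ^ (m - (t - 1)) with hW
      by_cases hpar : α ≤ n / W * W ∧ (n / W + 1) * W ≤ β
      · exact ih (t - 1) (by omega) (by omega) (by omega) hpar.1 hpar.2
      · refine ⟨(t, n / w), ?_, hrange⟩
        rw [mem_dyDec]
        refine ⟨hmemv, hsa, hsb, Or.inr ?_⟩
        have hWw : (2:ℕ) ^ (m - t + 1) = W := by
          rw [hW]; congr 1; omega
        have hpidx : (n / w) / 2 = n / W := by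
          rw [Nat.div_div_eq_div_mul, hw, ← pow_succ, ← hWw]
        rw [hpidx, hWw]
        push_neg at hpar
        rcases Nat.lt_or_ge (n / W * W) α with h | h
        · exact Or.inl h
        · exact Or.inr (hpar h)
  
lemma dyDec_cover {m α β : ℕ} (hm : 1 ≤ m) (hβ : β ≤ 2 ^ m) {n : ℕ}
    (hα : α ≤ n) (hn : n < β) :
    ∃ q ∈ dyDec m α β, dyS m q ≤ n ∧ n < dyE m q := by
  have hn2 : n < 2 ^ m := lt_of_lt_of_le hn hβ
  have h0 : m - m = 0 := by omega
  apply dyDec_cover_aux hβ hn2 m hm (le_refl m) <;> rw [h0] <;> simp [hα]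
  omega


lemma univ_pi_eq {ι : Type*} {α : ι → Type*} {s t : ∀ i, Set (α i)}
    (hs : ∀ i, (s i).Nonempty) (h : Set.univ.pi s = Set.univ.pi t) (i : ι) : s i = t i := by
  have hne : (Set.univ.pi s).Nonempty := Set.univ_pi_nonempty_iff.2 hs
  rw [← Set.eval_image_univ_pi hne, h, Set.eval_image_univ_pi (h ▸ hne)]

lemma dyPair_inj {m : ℕ} {q q' : ℕ × ℕ} (hq : q ∈ validQ m) (hq' : q' ∈ validQ m)
    (h : dyPair m q = dyPair m q') : q = q' := by
  obtain ⟨⟨h1, h2⟩, _, _⟩ := mem_validQ.1 hq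
  obtain ⟨⟨h1', h2'⟩, _, _⟩ := mem_validQ.1 hq'
  have hS : dyS m q = dyS m q' := congrArg Prod.fst h
  have hE : dyE m q = dyE m q' := congrArg Prod.snd h
  unfold dyS at hS
  unfold dyE at hE
  rw [add_one_mul, add_one_mul, hS] at hE
  have hw : (2:ℕ) ^ (m - q.1) = 2 ^ (m - q'.1) := Nat.add_left_cancel hE
  have ht : q.1 = q'.1 := by
    have := Nat.pow_right_injective (le_refl 2) hw
    omega
  have hi : q.2 = q'.2 := by
    rw [ht] at hS
    exact Nat.eq_of_mul_eq_mul_right (pow_pos (by norm_num) _) hS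
  exact Prod.ext ht hi

section onedim

variable {μ : Measure ℝ} [IsProbabilityMeasure μ] (h1 : μ (Set.Icc 0 1) = 1)
  (hat : ∀ a : ℝ, μ {a} = 0)
include h1 hat

lemma mem_piece_dy {m : ℕ} {q : ℕ × ℕ} (hq : q ∈ validQ m)
    {x : ℝ} {n : ℕ} (hn : n < 2 ^ m) (hxn : x ∈ piece μ (2 ^ m) (n, n + 1))
    (hxu : ∀ n', n' < 2 ^ m ∧ x ∈ piece μ (2 ^ m) (n', n' + 1) → n' = n) :
    x ∈ piece μ (2 ^ m) (dyPair m q) ↔ dyS m q ≤ n ∧ n < dyE m q := by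
  have hN1 : 0 < 2 ^ m := pow_pos two_pos m
  have hpair := validQ_pair hq
  have hdp : dyPair m q = (dyS m q, dyE m q) := rfl
  constructor
  · intro hx
    rw [hdp, piece_union_fine h1 hat hN1 hpair.1 hpair.2] at hx
    simp only [Set.mem_iUnion, Finset.mem_Ico, exists_prop] at hx
    obtain ⟨n', ⟨hn'1, hn'2⟩, hn'3⟩ := hx
    have := hxu n' ⟨lt_of_lt_of_le hn'2 hpair.2, hn'3⟩
    omega
  · intro hrange
    rw [hdp, piece_union_fine h1 hat hN1 hpair.1 hpair.2]
    simp only [Set.mem_iUnion, Finset.mem_Ico, exists_prop]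
    exact ⟨n, ⟨hrange.1, hrange.2⟩, hxn⟩

lemma piece_between {N : ℕ} (hN : 0 < N) {I : Set ℝ} (hI : I.OrdConnected)
    {n1 n n2 : ℕ} (hn1 : n1 < n) (hn2 : n < n2) (hn2N : n2 < N)
    {y1 y2 : ℝ} (hy1 : y1 ∈ piece μ N (n1, n1 + 1)) (hy2 : y2 ∈ piece μ N (n2, n2 + 1))
    (hy1I : y1 ∈ I) (hy2I : y2 ∈ I) : piece μ N (n, n + 1) ⊆ I := by
  intro z hz
  have hne1 : n1 + 1 ≠ N := by omega
  have hne2 : n + 1 ≠ N := by omega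
  have hz1 : y1 ≤ z := by
    have ha : y1 < qp μ N (n1 + 1) := piece_subset_Iio μ N (p := (n1, n1 + 1)) hne1 hy1
    have hb : qp μ N n ≤ z := piece_subset_Ici μ N (n, n + 1) hz
    have hc : qp μ N (n1 + 1) ≤ qp μ N n := qp_mono h1 hat hN (by omega) (by omega)
    linarith
  have hz2 : z ≤ y2 := by
    have ha : z < qp μ N (n + 1) := piece_subset_Iio μ N (p := (n, n + 1)) hne2 hz
    have hb : qp μ N n2 ≤ y2 := piece_subset_Ici μ N (n2, n2 + 1) hy2
    have hc : qp μ N (n + 1) ≤ qp μ N n2 := qp_mono h1 hat hN (by omega) (by omega)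
    linarith
  exact hI.out hy1I hy2I ⟨hz1, hz2⟩

end onedim

lemma convex_finset_Ico {s : Finset ℕ} {N : ℕ} (hsub : ∀ n ∈ s, n < N)
    (hconv : ∀ n1 n2 n, n1 ∈ s → n2 ∈ s → n1 ≤ n → n ≤ n2 → n ∈ s) :
    ∃ a b, b ≤ N ∧ s = Finset.Ico a b := by
  rcases s.eq_empty_or_nonempty with h | h
  · exact ⟨0, 0, Nat.zero_le N, by simp [h]⟩
  · refine ⟨s.min' h, s.max' h + 1, hsub _ (s.max'_mem h), ?_⟩
    ext n
    simp only [Finset.mem_Ico]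
    constructor
    · intro hn
      exact ⟨s.min'_le n hn, Nat.lt_succ_of_le (s.le_max' n hn)⟩
    · rintro ⟨hh1, hh2⟩
      exact hconv _ _ n (s.min'_mem h) (s.max'_mem h) hh1 (by omega)

end ObCov

lemma mem_unitCube {d : ℕ} {x : Fin d → ℝ} : x ∈ unitCube d ↔ ∀ j, x j ∈ Set.Icc (0:ℝ) 1 := by
  unfold unitCube
  exact Set.mem_univ_pi

theorem oblivious_covering_exists
    (d k : ℕ) (hd : 1 ≤ d) (hk : 1 ≤ k) (ε : ℝ) (hε : 0 < ε) (hε1 : ε ≤ 1)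
    (P : Measure (Fin d → ℝ)) [IsProbabilityMeasure P] (hsupp : P (unitCube d) = 1)
    (hatomless : ∀ j : Fin d, ∀ a : ℝ, P.map (fun x => x j) {a} = 0) :
    ∃ F, IsObliviousCovering d k
      (2 ^ d * (⌈Real.logb 2 (4 * k * d / ε)⌉₊ : ℕ) ^ d)
      ((⌈Real.logb 2 (4 * k * d / ε)⌉₊ : ℕ) ^ d) ε P F := by
  classical
  set m : ℕ := ⌈Real.logb 2 (4 * k * d / ε)⌉₊ with hmdef
  have hdR : (1:ℝ) ≤ (d:ℝ) := by exact_mod_cast hd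
  have hkR : (1:ℝ) ≤ (k:ℝ) := by exact_mod_cast hk
  have hquotpos : (0:ℝ) < 4 * k * d / ε := by
    apply div_pos (by nlinarith) hε
  have hm1 : 1 ≤ m := by
    rw [hmdef, Nat.one_le_ceil_iff]
    apply Real.logb_pos (by norm_num)
    rw [lt_div_iff₀ hε]
    nlinarith
  have hN1 : 0 < 2 ^ m := pow_pos two_pos m
  have hNpos : (0:ℝ) < ((2 ^ m : ℕ) : ℝ) := by positivity
  have hNR : (4:ℝ) * k * d / ε ≤ ((2 ^ m : ℕ) : ℝ) := by
    have hle : Real.logb 2 (4 * k * d / ε) ≤ (m : ℝ) := Nat.le_ceil _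
    calc (4:ℝ) * k * d / ε = 2 ^ Real.logb 2 (4 * k * d / ε) :=
        (Real.rpow_logb (by norm_num) (by norm_num) hquotpos).symm
      _ ≤ (2:ℝ) ^ (m : ℝ) := Real.rpow_le_rpow_of_exponent_le (by norm_num) hle
      _ = ((2 ^ m : ℕ) : ℝ) := by rw [Real.rpow_natCast]; push_cast; ring
  -- marginals
  have hproj : ∀ j : Fin d, Measurable fun x : Fin d → ℝ => x j := fun j => measurable_pi_apply j
  set μ : Fin d → Measure ℝ := fun j => P.map fun x => x j with hμdef
  have hμprob : ∀ j, IsProbabilityMeasure (μ j) := fun j =>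
    Measure.isProbabilityMeasure_map (hproj j).aemeasurable
  have hμ1 : ∀ j, μ j (Set.Icc 0 1) = 1 := by
    intro j
    haveI := hμprob j
    show P.map (fun x => x j) (Set.Icc 0 1) = 1
    rw [Measure.map_apply (hproj j) measurableSet_Icc]
    refine le_antisymm prob_le_one ?_
    rw [← hsupp]
    apply measure_mono
    intro x hx
    exact mem_unitCube.1 hx j
  have hμat : ∀ j, ∀ a : ℝ, μ j {a} = 0 := hatomless
  -- the family
  set box : (Fin d → ℕ × ℕ) → Set (Fin d → ℝ) :=
    (fun f => Set.univ.pi fun j => ObCov.piece (μ j) (2 ^ m) (ObCov.dyPair m (f j))) with hboxdef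
  set F : Finset (Set (Fin d → ℝ)) :=
    (Fintype.piFinset fun _ : Fin d => ObCov.validQ m).image box with hFdef
  have hpiece_ne : ∀ (j : Fin d) (q : ℕ × ℕ), q ∈ ObCov.validQ m →
      (ObCov.piece (μ j) (2 ^ m) (ObCov.dyPair m q)).Nonempty := by
    intro j q hq
    haveI := hμprob j
    exact ObCov.piece_nonempty (hμ1 j) (hμat j) hN1 (ObCov.validQ_pair hq).1
      (ObCov.validQ_pair hq).2
  have hbox_eq_comp : ∀ f g : Fin d → ℕ × ℕ, (∀ j, f j ∈ ObCov.validQ m) →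
      (∀ j, g j ∈ ObCov.validQ m) → box f = box g → ∀ j, f j = g j := by
    intro f g hf hg heq j
    have hcomp := ObCov.univ_pi_eq (fun j => hpiece_ne j (f j) (hf j)) heq j
    haveI := hμprob j
    have hpf := ObCov.validQ_pair (hf j)
    have hpg := ObCov.validQ_pair (hg j)
    have := ObCov.piece_eq_inj (hμ1 j) (hμat j) hN1 hpf.1 hpf.2 hpg.1 hpg.2 hcomp
    exact ObCov.dyPair_inj (hf j) (hg j) this
  have hfineEU : ∀ x : Fin d → ℝ, x ∈ unitCube d → ∀ j,
      ∃ n, (n < 2 ^ m ∧ x j ∈ ObCov.piece (μ j) (2 ^ m) (n, n + 1)) ∧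
        ∀ n', n' < 2 ^ m ∧ x j ∈ ObCov.piece (μ j) (2 ^ m) (n', n' + 1) → n' = n := by
    intro x hx j
    haveI := hμprob j
    exact ObCov.fine_exists_unique (hμ1 j) (hμat j) hN1 (mem_unitCube.1 hx j)
  refine ⟨F, ?_, ?_, ?_⟩
  · -- measurability
    intro S hS
    rw [hFdef] at hS
    obtain ⟨f, _, rfl⟩ := Finset.mem_image.1 hS
    exact MeasurableSet.univ_pi fun j => ObCov.piece_measurable (μ j) _ _
  · -- counting
    intro x hx
    choose fidx hfidx hfidxu using hfineEU x hx
    set dq : (Fin d → ℕ) → (Fin d → ℕ × ℕ) :=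
      fun T j => (T j, fidx j / 2 ^ (m - T j)) with hdqdef
    have hdq_valid : ∀ T : Fin d → ℕ, (∀ j, T j ∈ Finset.Icc 1 m) →
        ∀ j, dq T j ∈ ObCov.validQ m := by
      intro T hT j
      obtain ⟨h1t, h2t⟩ := Finset.mem_Icc.1 (hT j)
      rw [ObCov.mem_validQ]
      have hwpos : 0 < 2 ^ (m - T j) := pow_pos two_pos _
      refine ⟨⟨h1t, h2t⟩, ?_, ?_⟩
      · show fidx j / 2 ^ (m - T j) < 2 ^ T j
        rw [Nat.div_lt_iff_lt_mul hwpos]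
        calc fidx j < 2 ^ m := (hfidx j).1
          _ = 2 ^ T j * 2 ^ (m - T j) := by rw [← pow_add]; congr 1; omega
      · exact lt_of_le_of_lt (Nat.div_le_self _ _) (hfidx j).1
    have hdq_range : ∀ (T : Fin d → ℕ) (j : Fin d),
        ObCov.dyS m (dq T j) ≤ fidx j ∧ fidx j < ObCov.dyE m (dq T j) := by
      intro T j
      constructor
      · exact Nat.div_mul_le_self _ _
      · exact ObCov.nat_lt_div_succ (pow_pos two_pos _)
    have hcard : (Fintype.piFinset fun _ : Fin d => Finset.Icc 1 m).card
        = (F.filter fun S => x ∈ S).card := by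
      apply Finset.card_bij (fun T _ => box (dq T))
      · intro T hT
        have hTv : ∀ j, T j ∈ Finset.Icc 1 m := Fintype.mem_piFinset.1 hT
        rw [Finset.mem_filter]
        constructor
        · rw [hFdef]
          exact Finset.mem_image_of_mem box (Fintype.mem_piFinset.2 (hdq_valid T hTv))
        · show x ∈ Set.univ.pi fun j => ObCov.piece (μ j) (2 ^ m) (ObCov.dyPair m (dq T j))
          rw [Set.mem_univ_pi]
          intro j
          haveI := hμprob j
          exact (ObCov.mem_piece_dy (hμ1 j) (hμat j) (hdq_valid T hTv j) (hfidx j).1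
            (hfidx j).2 (hfidxu j)).2 (hdq_range T j)
      · intro T hT T' hT' heq
        have hTv := Fintype.mem_piFinset.1 hT
        have hT'v := Fintype.mem_piFinset.1 hT'
        funext j
        have hj := hbox_eq_comp (dq T) (dq T') (hdq_valid T hTv) (hdq_valid T' hT'v) heq j
        exact congrArg Prod.fst hj
      · intro S hS
        rw [Finset.mem_filter, hFdef] at hS
        obtain ⟨hSF, hxS⟩ := hS
        obtain ⟨f, hfv, rfl⟩ := Finset.mem_image.1 hSF
        have hfval : ∀ j, f j ∈ ObCov.validQ m := Fintype.mem_piFinset.1 hfv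
        refine ⟨fun j => (f j).1, ?_, ?_⟩
        · apply Fintype.mem_piFinset.2
          intro j
          have := (ObCov.mem_validQ.1 (hfval j)).1
          exact Finset.mem_Icc.2 ⟨this.1, this.2⟩
        · have hcomp : ∀ j, dq (fun j' => (f j').1) j = f j := by
            intro j
            haveI := hμprob j
            have hxj' : x j ∈ ObCov.piece (μ j) (2 ^ m) (ObCov.dyPair m (f j)) :=
              Set.mem_univ_pi.1 hxS j
            have hrange := (ObCov.mem_piece_dy (hμ1 j) (hμat j) (hfval j) (hfidx j).1
              (hfidx j).2 (hfidxu j)).1 hxj'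
            have h2 : (f j).2 = fidx j / 2 ^ (m - (f j).1) :=
              (Nat.div_eq_of_lt_le hrange.1 hrange.2).symm
            show ((f j).1, fidx j / 2 ^ (m - (f j).1)) = f j
            rw [← h2]
          exact congrArg box (funext hcomp)
    rw [← hcard, Fintype.card_piFinset]
    simp [Nat.card_Icc]
  · -- the covering property
    intro R hrect hRdisj hRunion
    choose I hI using hrect
    have hIord : ∀ (i : Fin k) (j : Fin d), (I i j).OrdConnected := fun i => (hI i).1
    have hIeq : ∀ i, R i = Set.univ.pi (I i) := fun i => (hI i).2
    set Kf : Fin k → Fin d → Finset ℕ := fun i j =>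
      (Finset.range (2 ^ m)).filter fun n =>
        ObCov.piece (μ j) (2 ^ m) (n, n + 1) ⊆ I i j with hKdef
    set Mf : Fin k → Fin d → Finset ℕ := fun i j =>
      (Finset.range (2 ^ m)).filter fun n =>
        (ObCov.piece (μ j) (2 ^ m) (n, n + 1) ∩ I i j).Nonempty with hMdef
    have hKmem : ∀ i j n, n ∈ Kf i j ↔ n < 2 ^ m ∧
        ObCov.piece (μ j) (2 ^ m) (n, n + 1) ⊆ I i j := by
      intro i j n
      show n ∈ (Finset.range (2 ^ m)).filter _ ↔ _
      rw [Finset.mem_filter, Finset.mem_range]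
    have hMmem : ∀ i j n, n ∈ Mf i j ↔ n < 2 ^ m ∧
        (ObCov.piece (μ j) (2 ^ m) (n, n + 1) ∩ I i j).Nonempty := by
      intro i j n
      show n ∈ (Finset.range (2 ^ m)).filter _ ↔ _
      rw [Finset.mem_filter, Finset.mem_range]
    have hKM : ∀ i j, Kf i j ⊆ Mf i j := by
      intro i j n hn
      rw [hKmem] at hn
      rw [hMmem]
      haveI := hμprob j
      obtain ⟨y, hy⟩ := ObCov.piece_nonempty (p := (n, n + 1)) (hμ1 j) (hμat j) hN1
        (Nat.lt_succ_self n) hn.1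
      exact ⟨hn.1, y, hy, hn.2 hy⟩
    have hMtoK : ∀ i j n1 n2 n, n1 ∈ Mf i j → n2 ∈ Mf i j → n1 < n → n < n2 → n ∈ Kf i j := by
      intro i j n1 n2 n hn1 hn2 hlt1 hlt2
      rw [hMmem] at hn1 hn2
      obtain ⟨y1, hy1p, hy1I⟩ := hn1.2
      obtain ⟨y2, hy2p, hy2I⟩ := hn2.2
      rw [hKmem]
      haveI := hμprob j
      refine ⟨by omega, ?_⟩
      exact ObCov.piece_between (hμ1 j) (hμat j) hN1 (hIord i j) hlt1 hlt2 hn2.1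
        hy1p hy2p hy1I hy2I
    have hKchar : ∀ i j, ∃ a b, b ≤ 2 ^ m ∧ Kf i j = Finset.Ico a b := by
      intro i j
      apply ObCov.convex_finset_Ico
      · intro n hn
        exact ((hKmem i j n).1 hn).1
      · intro n1 n2 n hn1 hn2 hle1 hle2
        rcases eq_or_lt_of_le hle1 with h | h
        · rwa [← h]
        rcases eq_or_lt_of_le hle2 with h2 | h2
        · rwa [h2]
        · exact hMtoK i j n1 n2 n (hKM i j hn1) (hKM i j hn2) h h2
    choose aK bK hbKN hKIco using hKchar
    set Dy : Fin k → Fin d → Finset (ℕ × ℕ) := fun i j =>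
      ObCov.dyDec m (aK i j) (bK i j) with hDydef
    have hDyval : ∀ i j, ∀ q ∈ Dy i j, q ∈ ObCov.validQ m := by
      intro i j q hq
      exact ObCov.dyDec_subset _ _ _ hq
    have hDysub : ∀ i j, ∀ q ∈ Dy i j,
        ObCov.piece (μ j) (2 ^ m) (ObCov.dyPair m q) ⊆ I i j := by
      intro i j q hq
      haveI := hμprob j
      obtain ⟨hqv, hqa, hqb, _⟩ := ObCov.mem_dyDec.1 hq
      have hpair := ObCov.validQ_pair hqv
      have hdp : ObCov.dyPair m q = (ObCov.dyS m q, ObCov.dyE m q) := rfl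
      rw [hdp, ObCov.piece_union_fine (hμ1 j) (hμat j) hN1 hpair.1 hpair.2]
      apply Set.iUnion₂_subset
      intro n hn
      rw [Finset.mem_Ico] at hn
      have hnK : n ∈ Kf i j := by
        rw [hKIco i j, Finset.mem_Ico]
        have := hbKN i j
        omega
      exact ((hKmem i j n).1 hnK).2
    set Sfi : Fin k → Finset (Set (Fin d → ℝ)) := fun i =>
      (Fintype.piFinset fun j => Dy i j).image box with hSfidef
    set Sf : Finset (Set (Fin d → ℝ)) := Finset.univ.biUnion Sfi with hSfdef
    have hSfi_boxmem : ∀ (i : Fin k) (S), S ∈ Sfi i →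
        ∃ f : Fin d → ℕ × ℕ, (∀ j, f j ∈ Dy i j) ∧ box f = S := by
      intro i S hS
      obtain ⟨f, hf, rfl⟩ := Finset.mem_image.1 hS
      exact ⟨f, Fintype.mem_piFinset.1 hf, rfl⟩
    have hSfi_subR : ∀ (i : Fin k) (S), S ∈ Sfi i → S ⊆ R i := by
      intro i S hS
      obtain ⟨f, hf, rfl⟩ := hSfi_boxmem i S hS
      rw [hIeq i]
      show Set.univ.pi _ ⊆ Set.univ.pi (I i)
      apply Set.pi_mono
      intro j _
      exact hDysub i j (f j) (hf j)
    refine ⟨Sf, ?_, ?_, ?_, ?_, ?_⟩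
    · -- Sf ⊆ F
      intro S hS
      obtain ⟨i, _, hSi⟩ := Finset.mem_biUnion.1 hS
      obtain ⟨f, hf, rfl⟩ := hSfi_boxmem i S hSi
      rw [hFdef]
      exact Finset.mem_image_of_mem box
        (Fintype.mem_piFinset.2 fun j => hDyval i j (f j) (hf j))
    · -- cardinality
      calc Sf.card ≤ ∑ i : Fin k, (Sfi i).card := Finset.card_biUnion_le
        _ ≤ ∑ _i : Fin k, (2 * m) ^ d := by
            apply Finset.sum_le_sum
            intro i _
            calc (Sfi i).card ≤ (Fintype.piFinset fun j => Dy i j).card :=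
                Finset.card_image_le
              _ = ∏ j : Fin d, (Dy i j).card := Fintype.card_piFinset _
              _ ≤ ∏ _j : Fin d, (2 * m) := Finset.prod_le_prod' fun j _ => ObCov.dyDec_card
              _ = (2 * m) ^ d := by rw [Finset.prod_const, Finset.card_univ, Fintype.card_fin]
        _ = k * (2 * m) ^ d := by
            rw [Finset.sum_const, Finset.card_univ, Fintype.card_fin, smul_eq_mul]
        _ = k * (2 ^ d * m ^ d) := by rw [mul_pow]
    · -- pairwise disjoint
      intro S hS S' hS' hne
      rw [Finset.mem_coe] at hS hS'
      obtain ⟨i, _, hSi⟩ := Finset.mem_biUnion.1 hS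
      obtain ⟨i', _, hS'i⟩ := Finset.mem_biUnion.1 hS'
      by_cases hii : i = i'
      · subst hii
        obtain ⟨f, hf, rfl⟩ := hSfi_boxmem i S hSi
        obtain ⟨f', hf', rfl⟩ := hSfi_boxmem i S' hS'i
        have hex : ∃ j, ObCov.piece (μ j) (2 ^ m) (ObCov.dyPair m (f j))
            ≠ ObCov.piece (μ j) (2 ^ m) (ObCov.dyPair m (f' j)) := by
          by_contra hcon
          push_neg at hcon
          exact hne (congrArg (Set.pi Set.univ) (funext hcon))
        obtain ⟨j, hj⟩ := hex
        have hfj : f j ≠ f' j := fun h => hj (by rw [h])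
        have hpair := ObCov.validQ_pair (hDyval i j _ (hf j))
        have hpair' := ObCov.validQ_pair (hDyval i j _ (hf' j))
        have hcases : ObCov.dyE m (f j) ≤ ObCov.dyS m (f' j) ∨
            ObCov.dyE m (f' j) ≤ ObCov.dyS m (f j) := by
          by_contra hcon
          push_neg at hcon
          exact ObCov.dyDec_ranges_disjoint (hf j) (hf' j) hfj
            (n := max (ObCov.dyS m (f j)) (ObCov.dyS m (f' j)))
            ⟨by omega, by omega⟩ ⟨by omega, by omega⟩
        haveI := hμprob j
        have hpd : Disjoint (ObCov.piece (μ j) (2 ^ m) (ObCov.dyPair m (f j)))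
            (ObCov.piece (μ j) (2 ^ m) (ObCov.dyPair m (f' j))) := by
          rcases hcases with h | h
          · exact ObCov.piece_disjoint (hμ1 j) (hμat j) hN1 hpair.1 h hpair'.1 hpair'.2
          · exact (ObCov.piece_disjoint (hμ1 j) (hμat j) hN1 hpair'.1 h hpair.1 hpair.2).symm
        rw [Set.disjoint_left]
        intro z hz hz'
        exact Set.disjoint_left.1 hpd (Set.mem_univ_pi.1 hz j) (Set.mem_univ_pi.1 hz' j)
      · exact (hRdisj (Set.mem_univ i) (Set.mem_univ i') hii).mono
          (hSfi_subR i S hSi) (hSfi_subR i' S' hS'i)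
    · -- mass bound
      set Bad : Set (Fin d → ℝ) := ⋃ i : Fin k, ⋃ j : Fin d,
        ((fun x : Fin d → ℝ => x j) ⁻¹'
          (⋃ n ∈ Mf i j \ Kf i j, ObCov.piece (μ j) (2 ^ m) (n, n + 1))) with hBaddef
      have hincl : unitCube d ⊆ ⋃₀ ↑Sf ∪ Bad := by
        intro x hx
        choose fidx hfidx hfidxu using hfineEU x hx
        have hxR : ∃ i, x ∈ R i := by
          have hx2 : x ∈ ⋃ i, R i := hRunion ▸ hx
          exact Set.mem_iUnion.1 hx2
        obtain ⟨i, hxRi⟩ := hxR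
        have hxI : ∀ j, x j ∈ I i j := by
          intro j
          have hx3 := hIeq i ▸ hxRi
          exact Set.mem_univ_pi.1 hx3 j
        by_cases hall : ∀ j, fidx j ∈ Kf i j
        · left
          have hcover : ∀ j, ∃ q ∈ Dy i j,
              ObCov.dyS m q ≤ fidx j ∧ fidx j < ObCov.dyE m q := by
            intro j
            have hmem := hall j
            rw [hKIco i j, Finset.mem_Ico] at hmem
            exact ObCov.dyDec_cover hm1 (hbKN i j) hmem.1 hmem.2
          choose qf hqf1 hqf2 using hcover
          have hboxmem : box qf ∈ Sf := by
            refine Finset.mem_biUnion.2 ⟨i, Finset.mem_univ i, ?_⟩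
            exact Finset.mem_image_of_mem box (Fintype.mem_piFinset.2 hqf1)
          refine Set.mem_sUnion.2 ⟨box qf, Finset.mem_coe.2 hboxmem, ?_⟩
          show x ∈ Set.univ.pi _
          rw [Set.mem_univ_pi]
          intro j
          haveI := hμprob j
          exact (ObCov.mem_piece_dy (hμ1 j) (hμat j) (hDyval i j _ (hqf1 j)) (hfidx j).1
            (hfidx j).2 (hfidxu j)).2 (hqf2 j)
        · right
          push_neg at hall
          obtain ⟨j, hj⟩ := hall
          have hMmemj : fidx j ∈ Mf i j :=
            (hMmem i j _).2 ⟨(hfidx j).1, ⟨x j, (hfidx j).2, hxI j⟩⟩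
          refine Set.mem_iUnion.2 ⟨i, Set.mem_iUnion.2 ⟨j, ?_⟩⟩
          show x j ∈ ⋃ n ∈ Mf i j \ Kf i j, ObCov.piece (μ j) (2 ^ m) (n, n + 1)
          exact Set.mem_biUnion (Finset.mem_sdiff.2 ⟨hMmemj, hj⟩) (hfidx j).2
      have hbadij : ∀ (i : Fin k) (j : Fin d),
          P ((fun x : Fin d → ℝ => x j) ⁻¹'
            (⋃ n ∈ Mf i j \ Kf i j, ObCov.piece (μ j) (2 ^ m) (n, n + 1)))
            ≤ 2 * ENNReal.ofReal (1 / ((2 ^ m : ℕ) : ℝ)) := by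
        intro i j
        haveI := hμprob j
        have hmeasB : MeasurableSet (⋃ n ∈ Mf i j \ Kf i j,
            ObCov.piece (μ j) (2 ^ m) (n, n + 1)) :=
          (Mf i j \ Kf i j).measurableSet_biUnion fun n _ => ObCov.piece_measurable (μ j) _ _
        have hmap : P ((fun x : Fin d → ℝ => x j) ⁻¹'
            (⋃ n ∈ Mf i j \ Kf i j, ObCov.piece (μ j) (2 ^ m) (n, n + 1)))
            = μ j (⋃ n ∈ Mf i j \ Kf i j, ObCov.piece (μ j) (2 ^ m) (n, n + 1)) :=
          (Measure.map_apply (hproj j) hmeasB).symm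
        rw [hmap]
        have hcard2 : (Mf i j \ Kf i j).card ≤ 2 := by
          rcases (Mf i j).eq_empty_or_nonempty with hMe | hMne
          · rw [hMe]
            simp
          · have hsub2 : Mf i j \ Kf i j ⊆
                {(Mf i j).min' hMne, (Mf i j).max' hMne} := by
              intro n hn
              rw [Finset.mem_sdiff] at hn
              by_contra hcon
              simp only [Finset.mem_insert, Finset.mem_singleton] at hcon
              push_neg at hcon
              have hlt1 : (Mf i j).min' hMne < n :=
                lt_of_le_of_ne ((Mf i j).min'_le n hn.1) (Ne.symm hcon.1)
              have hlt2 : n < (Mf i j).max' hMne :=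
                lt_of_le_of_ne ((Mf i j).le_max' n hn.1) hcon.2
              exact hn.2 (hMtoK i j _ _ n ((Mf i j).min'_mem hMne)
                ((Mf i j).max'_mem hMne) hlt1 hlt2)
            refine le_trans (Finset.card_le_card hsub2) ?_
            refine le_trans (Finset.card_insert_le _ _) ?_
            simp
        calc μ j (⋃ n ∈ Mf i j \ Kf i j, ObCov.piece (μ j) (2 ^ m) (n, n + 1))
            ≤ ∑ n ∈ Mf i j \ Kf i j, μ j (ObCov.piece (μ j) (2 ^ m) (n, n + 1)) :=
              measure_biUnion_finset_le _ _
          _ ≤ ∑ _n ∈ Mf i j \ Kf i j, ENNReal.ofReal (1 / ((2 ^ m : ℕ) : ℝ)) := by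
              apply Finset.sum_le_sum
              intro n hn
              have hnM : n ∈ Mf i j := (Finset.mem_sdiff.1 hn).1
              have hnN : n < 2 ^ m := ((hMmem i j n).1 hnM).1
              exact ObCov.meas_fine_le (hμ1 j) (hμat j) hN1 hnN
          _ = ((Mf i j \ Kf i j).card : ℝ≥0∞) * ENNReal.ofReal (1 / ((2 ^ m : ℕ) : ℝ)) := by
              rw [Finset.sum_const, nsmul_eq_mul]
          _ ≤ 2 * ENNReal.ofReal (1 / ((2 ^ m : ℕ) : ℝ)) := by
              gcongr
              exact_mod_cast hcard2
      have hBadtot : P Bad ≤ ENNReal.ofReal (ε / 2) := by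
        have hstep : P Bad ≤ ∑ _i : Fin k, ∑ _j : Fin d,
            (2 * ENNReal.ofReal (1 / ((2 ^ m : ℕ) : ℝ))) := by
          rw [hBaddef]
          refine le_trans (measure_iUnion_le _) ?_
          rw [tsum_fintype]
          apply Finset.sum_le_sum
          intro i _
          refine le_trans (measure_iUnion_le _) ?_
          rw [tsum_fintype]
          exact Finset.sum_le_sum fun j _ => hbadij i j
        refine le_trans hstep ?_
        rw [Finset.sum_const, Finset.sum_const, Finset.card_univ, Finset.card_univ,
          Fintype.card_fin, Fintype.card_fin, nsmul_eq_mul, nsmul_eq_mul]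
        have hofk : (k : ℝ≥0∞) = ENNReal.ofReal (k : ℝ) := (ENNReal.ofReal_natCast k).symm
        have hofd : (d : ℝ≥0∞) = ENNReal.ofReal (d : ℝ) := (ENNReal.ofReal_natCast d).symm
        have hof2 : (2 : ℝ≥0∞) = ENNReal.ofReal (2 : ℝ) := by
          rw [ENNReal.ofReal_ofNat]
        rw [hofk, hofd, hof2, ← ENNReal.ofReal_mul (by positivity),
          ← ENNReal.ofReal_mul (by positivity), ← ENNReal.ofReal_mul (by positivity)]
        apply ENNReal.ofReal_le_ofReal
        have h4 : 4 * (k:ℝ) * d ≤ ε * ((2 ^ m : ℕ) : ℝ) := by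
          rw [div_le_iff₀ hε] at hNR
          linarith
        have hrw : (k:ℝ) * ((d:ℝ) * (2 * (1 / ((2 ^ m : ℕ) : ℝ))))
            = 2 * k * d / ((2 ^ m : ℕ) : ℝ) := by ring
        rw [hrw, div_le_div_iff₀ hNpos (by norm_num : (0:ℝ) < 2)]
        nlinarith
      have hone : (1 : ℝ≥0∞) ≤ P (⋃₀ ↑Sf) + ENNReal.ofReal (ε / 2) := by
        calc (1:ℝ≥0∞) = P (unitCube d) := hsupp.symm
          _ ≤ P (⋃₀ ↑Sf ∪ Bad) := measure_mono hincl
          _ ≤ P (⋃₀ ↑Sf) + P Bad := measure_union_le _ _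
          _ ≤ P (⋃₀ ↑Sf) + ENNReal.ofReal (ε / 2) := by gcongr
      have hsum : ENNReal.ofReal (1 - ε) + ENNReal.ofReal (ε / 2)
          ≤ P (⋃₀ ↑Sf) + ENNReal.ofReal (ε / 2) := by
        refine le_trans ?_ hone
        rw [← ENNReal.ofReal_add (by linarith) (by linarith)]
        calc ENNReal.ofReal (1 - ε + ε / 2) ≤ ENNReal.ofReal 1 :=
            ENNReal.ofReal_le_ofReal (by linarith)
          _ = 1 := ENNReal.ofReal_one
      exact (ENNReal.add_le_add_iff_right ENNReal.ofReal_ne_top).1 hsum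
    · -- containment in rectangles
      intro S hS
      obtain ⟨i, _, hSi⟩ := Finset.mem_biUnion.1 hS
      exact ⟨i, hSfi_subR i S hSi⟩


end
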